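/- For all complex numbers a and b with |a| ≤ 1 and |b| ≤ 1, the inequality (1/4)·((|a|² − 1)² − (|b|² − 1)²) ≤ (|b|² − 1)·Re( conj(b)·(a − b) ) + |a − b|² holds. -/

import Mathlib

theorem double_well_taylor_ineq (a b : ℂ) (ha : ‖a‖ ≤ 1) (hb : ‖b‖ ≤ 1) :
    (1 / 4 : ℝ) * ((‖a‖ ^ 2 - 1) ^ 2 - (‖b‖ ^ 2 - 1) ^ 2) ≤
      (‖b‖ ^ 2 - 1) * ((starRingEnd ℂ) b * (a - b)).re
        + ‖a - b‖ ^ 2 := by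
  have key : ‖a‖ ^ 2 = ‖b‖ ^ 2
      + 2 * ((starRingEnd ℂ) b * (a - b)).re + ‖a - b‖ ^ 2 := by
    rw [Complex.sq_norm, Complex.sq_norm, Complex.sq_norm]
    simp [Complex.normSq_apply, Complex.mul_re, Complex.sub_re, Complex.sub_im]
    ring
  have h1 : ‖a‖ - ‖b‖ ≤ ‖a - b‖ := by
    simpa using norm_sub_norm_le a b
  have h2 : ‖b‖ - ‖a‖ ≤ ‖a - b‖ := by
    have := norm_sub_norm_le b a
    rwa [norm_sub_rev b a] at this
  have ha0 : 0 ≤ ‖a‖ := norm_nonneg a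
  have hb0 : 0 ≤ ‖b‖ := norm_nonneg b
  have hd0 : 0 ≤ ‖a - b‖ := norm_nonneg _
  have hsq : (‖a‖ - ‖b‖) ^ 2 ≤ ‖a - b‖ ^ 2 := by
    nlinarith
  have h3 : (‖a‖ ^ 2 - ‖b‖ ^ 2) ^ 2 ≤ 4 * ‖a - b‖ ^ 2 := by
    have hsum : (‖a‖ + ‖b‖) ^ 2 ≤ 4 := by nlinarith
    calc (‖a‖ ^ 2 - ‖b‖ ^ 2) ^ 2
        = (‖a‖ - ‖b‖) ^ 2 * (‖a‖ + ‖b‖) ^ 2 := by ring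
      _ ≤ ‖a - b‖ ^ 2 * 4 := by
          apply mul_le_mul hsq hsum (sq_nonneg _) (sq_nonneg _)
      _ = 4 * ‖a - b‖ ^ 2 := by ring
  have hy2 : ‖b‖ ^ 2 ≤ 1 := by nlinarith
  have hmul : 0 ≤ ‖a - b‖ ^ 2 * (1 - ‖b‖ ^ 2) :=
    mul_nonneg (sq_nonneg _) (by linarith)
  nlinarith [sq_nonneg (‖a - b‖)]
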